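/- For 0 < y < n, the lower incomplete gamma function satisfies γ(n, y) = ∫_0^y t^{n-1} e^{-t} dt ≤ y^n e^{-y}/(n - y). -/

import Mathlib

open MeasureTheory

/-- For real `s` with `0 < y < s`, the lower incomplete gamma function satisfies
`γ(s,y) = ∫_0^y t^{s-1} e^{-t} dt ≤ y^s e^{-y} / (s - y)`. -/
theorem lowerGamma_bound (s y : ℝ) (hy : 0 < y) (hys : y < s) :
    (∫ t in Set.Ioc (0 : ℝ) y, t ^ (s - 1) * Real.exp (-t)) ≤
      y ^ s * Real.exp (-y) / (s - y) := by
  have hsy : (0:ℝ) < s - y := by linarith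
  -- pointwise bound
  have key : ∀ t ∈ Set.Ioc (0:ℝ) y,
      t ^ (s-1) * Real.exp (-t) ≤ (Real.exp (-y) * y ^ y) * t ^ (s - y - 1) := by
    rintro t ⟨ht0, hty⟩
    have h1 : t ^ (s-1) = t ^ (s-y-1) * t ^ y := by
      rw [← Real.rpow_add ht0]; ring_nf
    have hlog : Real.log t - Real.log y ≤ t / y - 1 := by
      have := Real.log_le_sub_one_of_pos (div_pos ht0 hy)
      rwa [Real.log_div ht0.ne' hy.ne'] at this
    have h2 : t ^ y * Real.exp (-t) ≤ y ^ y * Real.exp (-y) := by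
      rw [Real.rpow_def_of_pos ht0, Real.rpow_def_of_pos hy, ← Real.exp_add, ← Real.exp_add]
      apply Real.exp_le_exp.mpr
      have : y * (Real.log t - Real.log y) ≤ y * (t / y - 1) :=
        mul_le_mul_of_nonneg_left hlog hy.le
      have h3 : y * (t / y - 1) = t - y := by field_simp
      nlinarith
    calc t ^ (s-1) * Real.exp (-t) = t ^ (s-y-1) * (t ^ y * Real.exp (-t)) := by
          rw [h1]; ring
      _ ≤ t ^ (s-y-1) * (y ^ y * Real.exp (-y)) := by
          apply mul_le_mul_of_nonneg_left h2 (Real.rpow_nonneg ht0.le _)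
      _ = (Real.exp (-y) * y ^ y) * t ^ (s - y - 1) := by ring
  have hint1 : IntegrableOn (fun t => t ^ (s-1) * Real.exp (-t)) (Set.Ioc (0:ℝ) y) := by
    rw [← intervalIntegrable_iff_integrableOn_Ioc_of_le hy.le]
    exact (intervalIntegral.intervalIntegrable_rpow' (by linarith)).mul_continuousOn
      (Continuous.continuousOn (by continuity))
  have hint2 : IntegrableOn (fun t => (Real.exp (-y) * y ^ y) * t ^ (s - y - 1))
      (Set.Ioc (0:ℝ) y) := by
    rw [← intervalIntegrable_iff_integrableOn_Ioc_of_le hy.le]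
    exact (intervalIntegral.intervalIntegrable_rpow' (by linarith)).const_mul _
  have hmono := setIntegral_mono_on hint1 hint2 measurableSet_Ioc key
  refine hmono.trans ?_
  have hval : (∫ t in Set.Ioc (0:ℝ) y, (Real.exp (-y) * y ^ y) * t ^ (s - y - 1))
      = y ^ s * Real.exp (-y) / (s - y) := by
    rw [← intervalIntegral.integral_of_le hy.le, intervalIntegral.integral_const_mul,
      integral_rpow (Or.inl (by linarith))]
    rw [Real.zero_rpow (by linarith : s - y - 1 + 1 ≠ 0)]
    have : y ^ (s - y - 1 + 1) = y ^ (s - y) := by ring_nf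
    rw [this]
    have hys' : y ^ y * y ^ (s - y) = y ^ s := by
      rw [← Real.rpow_add hy]; ring_nf
    rw [show s - y - 1 + 1 = s - y by ring, sub_zero]
    field_simp
    nlinarith [Real.exp_pos (-y), Real.rpow_pos_of_pos hy y, Real.rpow_pos_of_pos hy (s-y),
      hys']
  rw [hval]
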